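/- Theorem 1 (performance gap): Under the assumptions that ∑_s d^{π*}(s)·D_KL(π(·|s)||π_s(·|s)) ≤ ε₁ and ∑_s d^{π*}(s)·D_KL(π_s(·|s)||π*(·|s)) ≤ ε₂, that rewards satisfy 0 ≤ r ≤ R_m, and that the state-distribution error-propagation bound D_TV(d^π(s),d^{π*}(s)) ≤ (γ/(1−γ))·∑_s d^{π*}(s) D_TV(π(·|s),π*(·|s)) holds, the value gap satisfies V^{π*} − V^π ≤ (2R_m/(1−γ)²)·(sqrt(ε₁/2)+sqrt(ε₂/2)). -/

import Mathlib

open Finset Real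

private lemma keyG_mono : MonotoneOn (fun x : ℝ => (x+1)*Real.log x - 2*(x-1)) (Set.Ioi 0) := by
  apply monotoneOn_of_hasDerivWithinAt_nonneg (f' := fun x => Real.log x + (1/x - 1))
    (convex_Ioi 0)
  · intro x hx
    exact (((continuousAt_id.add continuousAt_const).mul
      (Real.continuousAt_log (ne_of_gt hx))).sub
      (continuousAt_const.mul (continuousAt_id.sub continuousAt_const))).continuousWithinAt
  · intro x hx
    rw [interior_Ioi] at hx
    have hx0 : x ≠ 0 := ne_of_gt hx
    have h1 : HasDerivAt (fun x : ℝ => (x+1)*Real.log x - 2*(x-1))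
        (1 * Real.log x + (x+1) * x⁻¹ - 2 * 1) x := by
      exact (((hasDerivAt_id x).add_const 1).mul (Real.hasDerivAt_log hx0)).sub
        (((hasDerivAt_id x).sub_const 1).const_mul 2)
    have : 1 * Real.log x + (x+1) * x⁻¹ - 2 * 1 = Real.log x + (1/x - 1) := by
      field_simp
      ring
    rw [this] at h1
    exact h1.hasDerivWithinAt
  · intro x hx
    rw [interior_Ioi] at hx
    have h := Real.one_sub_inv_le_log_of_pos hx
    rw [one_div]
    linarith

private lemma keyF_deriv (x : ℝ) (hx : 0 < x) :
    HasDerivAt (fun x : ℝ => 2*(x+2)*(x*Real.log x - x + 1) - 3*(x-1)^2)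
      (4 * ((x+1)*Real.log x - 2*(x-1))) x := by
  have hx0 : x ≠ 0 := ne_of_gt hx
  have hA : HasDerivAt (fun x : ℝ => 2*(x+2)) 2 x := by
    simpa using ((hasDerivAt_id x).add_const 2).const_mul 2
  have hB : HasDerivAt (fun x : ℝ => x*Real.log x - x + 1) (Real.log x) x := by
    have h1 : HasDerivAt (fun x : ℝ => x*Real.log x) (1 * Real.log x + x * x⁻¹) x :=
      (hasDerivAt_id x).mul (Real.hasDerivAt_log hx0)
    have h2 := (h1.sub (hasDerivAt_id x)).add_const 1
    have : 1 * Real.log x + x * x⁻¹ - 1 = Real.log x := by field_simp; ring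
    rw [this] at h2
    exact h2
  have hC : HasDerivAt (fun x : ℝ => 3*(x-1)^2) (3 * (2 * (x-1)^1 * 1)) x :=
    (((hasDerivAt_id x).sub_const 1).pow 2).const_mul 3
  have h := (hA.mul hB).sub hC
  have : 2 * (x*Real.log x - x + 1) + 2*(x+2) * Real.log x - 3 * (2 * (x-1)^1 * 1)
      = 4 * ((x+1)*Real.log x - 2*(x-1)) := by ring
  rw [this] at h
  exact h

private lemma keyF (x : ℝ) (hx : 0 ≤ x) :
    3*(x-1)^2 ≤ 2*(x+2)*(x*Real.log x - x + 1) := by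
  set F : ℝ → ℝ := fun x => 2*(x+2)*(x*Real.log x - x + 1) - 3*(x-1)^2 with hF
  have hcont : Continuous F := by
    apply Continuous.sub
    · exact (continuous_const.mul (continuous_id.add continuous_const)).mul
        ((Real.continuous_mul_log.sub continuous_id).add continuous_const)
    · exact continuous_const.mul ((continuous_id.sub continuous_const).pow 2)
  have hG1 : ((1:ℝ)+1)*Real.log 1 - 2*((1:ℝ)-1) = 0 := by simp
  have hF1 : F 1 = 0 := by simp [hF]
  have hFx : 0 ≤ F x := by
    rcases le_total x 1 with h1 | h1
    · have hanti : AntitoneOn F (Set.Icc 0 1) := by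
        apply antitoneOn_of_hasDerivWithinAt_nonpos
          (f' := fun x => 4 * ((x+1)*Real.log x - 2*(x-1))) (convex_Icc 0 1)
          hcont.continuousOn
        · intro y hy
          rw [interior_Icc] at hy
          exact (keyF_deriv y hy.1).hasDerivWithinAt
        · intro y hy
          rw [interior_Icc] at hy
          have h := keyG_mono (Set.mem_Ioi.2 hy.1) (Set.mem_Ioi.2 one_pos) (le_of_lt hy.2)
          norm_num [Real.log_one] at h
          linarith
      have := hanti (Set.mem_Icc.2 ⟨hx, h1⟩) (Set.mem_Icc.2 ⟨zero_le_one, le_refl 1⟩) h1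
      rw [hF1] at this
      linarith
    · have hmono : MonotoneOn F (Set.Ici 1) := by
        apply monotoneOn_of_hasDerivWithinAt_nonneg
          (f' := fun x => 4 * ((x+1)*Real.log x - 2*(x-1))) (convex_Ici 1)
          hcont.continuousOn
        · intro y hy
          rw [interior_Ici] at hy
          exact (keyF_deriv y (lt_trans one_pos hy)).hasDerivWithinAt
        · intro y hy
          rw [interior_Ici] at hy
          have h := keyG_mono (Set.mem_Ioi.2 one_pos) (Set.mem_Ioi.2 (lt_trans one_pos hy))
            (le_of_lt hy)
          norm_num [Real.log_one] at h
          linarith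
      have := hmono (Set.mem_Ici.2 (le_refl 1)) (Set.mem_Ici.2 h1) h1
      rw [hF1] at this
      linarith
  simp only [hF] at hFx
  linarith

private lemma key_pointwise (p q : ℝ) (hp : 0 ≤ p) (hq : 0 ≤ q) (hac : q = 0 → p = 0) :
    3*(p-q)^2 ≤ 2*(p+2*q)*(p*Real.log (p/q) - p + q) := by
  rcases eq_or_lt_of_le hq with hq0 | hq0
  · rw [hac hq0.symm, ← hq0]; norm_num
  · set x := p / q with hx
    have hx0 : 0 ≤ x := div_nonneg hp (le_of_lt hq0)
    have hpx : p = q * x := by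
      rw [hx, mul_div_assoc', mul_comm, mul_div_assoc, div_self (ne_of_gt hq0), mul_one]
    have key := keyF x hx0
    have h3 := mul_le_mul_of_nonneg_left key (sq_nonneg q)
    have e1 : 3*(p-q)^2 = q^2*(3*(x-1)^2) := by rw [hpx]; ring
    have e2 : 2*(p+2*q)*(p*Real.log x - p + q)
        = q^2*(2*(x+2)*(x*Real.log x - x + 1)) := by rw [hpx]; ring
    rw [e1, e2]
    exact h3

private lemma pinsker_aux {A : Type*} [Fintype A] (p q : A → ℝ)
    (hp0 : ∀ a, 0 ≤ p a) (hq0 : ∀ a, 0 ≤ q a)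
    (hp1 : ∑ a, p a = 1) (hq1 : ∑ a, q a = 1)
    (hac : ∀ a, q a = 0 → p a = 0) :
    0 ≤ ∑ a, p a * Real.log (p a / q a) ∧
    (1/2) * ∑ a, |p a - q a| ≤ Real.sqrt ((∑ a, p a * Real.log (p a / q a)) / 2) := by
  set K := ∑ a, p a * Real.log (p a / q a) with hK
  have hdiv : ∀ a, (p a - q a)^2 / (p a + 2*q a)
      ≤ (2/3) * (p a * Real.log (p a / q a) - p a + q a) := by
    intro a
    have hpt := key_pointwise (p a) (q a) (hp0 a) (hq0 a) (hac a)
    rcases eq_or_lt_of_le (add_nonneg (hp0 a) (by linarith [hq0 a] : (0:ℝ) ≤ 2 * q a)) with h0 | h0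
    · have hqa : q a = 0 := by nlinarith [hp0 a, hq0 a]
      have hpa : p a = 0 := hac a hqa
      simp [hpa, hqa]
    · rw [div_le_iff₀ h0]
      nlinarith
  have hCS : (∑ a, |p a - q a|)^2 ≤ 3 * ∑ a, (p a - q a)^2 / (p a + 2*q a) := by
    have hcs := Finset.sum_mul_sq_le_sq_mul_sq univ
      (fun a => Real.sqrt (p a + 2*q a)) (fun a => |p a - q a| / Real.sqrt (p a + 2*q a))
    have h1 : ∀ a : A, Real.sqrt (p a + 2*q a) * (|p a - q a| / Real.sqrt (p a + 2*q a))
        = |p a - q a| := by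
      intro a
      rcases eq_or_lt_of_le (add_nonneg (hp0 a) (by linarith [hq0 a] : (0:ℝ) ≤ 2 * q a)) with h0 | h0
      · have hqa : q a = 0 := by nlinarith [hp0 a, hq0 a]
        have hpa : p a = 0 := hac a hqa
        simp [hpa, hqa]
      · rw [mul_div_cancel₀]
        exact Real.sqrt_ne_zero'.2 h0
    have h2 : ∀ a : A, Real.sqrt (p a + 2*q a) ^ 2 = p a + 2*q a := by
      intro a
      exact Real.sq_sqrt (add_nonneg (hp0 a) (by linarith [hq0 a]))
    have h3 : ∀ a : A, (|p a - q a| / Real.sqrt (p a + 2*q a)) ^ 2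
        = (p a - q a)^2 / (p a + 2*q a) := by
      intro a
      rw [div_pow, sq_abs, h2 a]
    simp only [h1, h2, h3] at hcs
    have hsum3 : ∑ a, (p a + 2*q a) = 3 := by
      rw [Finset.sum_add_distrib, hp1, ← Finset.mul_sum, hq1]
      norm_num
    rw [hsum3] at hcs
    exact hcs
  have hsum_pt : ∑ a, (2/3) * (p a * Real.log (p a / q a) - p a + q a) = (2/3) * K := by
    rw [← Finset.mul_sum]
    congr 1
    rw [Finset.sum_add_distrib, Finset.sum_sub_distrib, hp1, hq1, hK]
    ring
  have hbound : (∑ a, |p a - q a|)^2 ≤ 2 * K := by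
    have hss := Finset.sum_le_sum (s := Finset.univ) (fun a _ => hdiv a)
    rw [hsum_pt] at hss
    nlinarith
  have hK0 : 0 ≤ K := by nlinarith [sq_nonneg (∑ a, |p a - q a|)]
  refine ⟨hK0, ?_⟩
  rw [Real.le_sqrt (by positivity) (by positivity)]
  nlinarith

private lemma jensen_sqrt {S : Type*} [Fintype S] (d k : S → ℝ)
    (hd0 : ∀ s, 0 ≤ d s) (hd1 : ∑ s, d s = 1) (hk : ∀ s, 0 ≤ k s) :
    ∑ s, d s * Real.sqrt (k s) ≤ Real.sqrt (∑ s, d s * k s) := by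
  have h := Real.sum_sqrt_mul_sqrt_le univ (f := d) (g := fun s => d s * k s)
    hd0 (fun s => mul_nonneg (hd0 s) (hk s))
  have h1 : ∀ s : S, Real.sqrt (d s) * Real.sqrt (d s * k s) = d s * Real.sqrt (k s) := by
    intro s
    rw [Real.sqrt_mul (hd0 s), ← mul_assoc, Real.mul_self_sqrt (hd0 s)]
  simp only [h1, hd1, Real.sqrt_one, one_mul] at h
  exact h

set_option maxHeartbeats 1000000 in
theorem theorem1_performance_gap {S A : Type*} [Fintype S] [Fintype A]
    (γ R_m ε₁ ε₂ : ℝ) (hγ0 : 0 < γ) (hγ1 : γ < 1)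
    (r : S × A → ℝ) (hr0 : ∀ x, 0 ≤ r x) (hrM : ∀ x, r x ≤ R_m)
    (dpi dstar : S → ℝ) (pi pis pistar : S → A → ℝ)
    (hd0 : ∀ s, 0 ≤ dpi s) (hd1 : ∑ s, dpi s = 1)
    (hs0 : ∀ s, 0 ≤ dstar s) (hs1 : ∑ s, dstar s = 1)
    (hpi0 : ∀ s a, 0 ≤ pi s a) (hpi1 : ∀ s, ∑ a, pi s a = 1)
    (hpis0 : ∀ s a, 0 ≤ pis s a) (hpis1 : ∀ s, ∑ a, pis s a = 1)
    (hps0 : ∀ s a, 0 ≤ pistar s a) (hps1 : ∀ s, ∑ a, pistar s a = 1)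
    (hac1 : ∀ s a, 0 < pi s a → 0 < pis s a)
    (hac2 : ∀ s a, 0 < pis s a → 0 < pistar s a)
    (hkl1 : ∑ s, dstar s * ∑ a, pi s a * Real.log (pi s a / pis s a) ≤ ε₁)
    (hkl2 : ∑ s, dstar s * ∑ a, pis s a * Real.log (pis s a / pistar s a) ≤ ε₂)
    (herr : (1/2) * ∑ s, |dpi s - dstar s| ≤
      (γ/(1-γ)) * ∑ s, dstar s * ((1/2) * ∑ a, |pi s a - pistar s a|))
    (Vpi Vstar : ℝ)
    (hVpi : Vpi = (1/(1-γ)) * ∑ x : S × A, dpi x.1 * pi x.1 x.2 * r x)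
    (hVstar : Vstar = (1/(1-γ)) * ∑ x : S × A, dstar x.1 * pistar x.1 x.2 * r x) :
    Vstar - Vpi ≤
      (2 * R_m / (1-γ)^2) * (Real.sqrt (ε₁ / 2) + Real.sqrt (ε₂ / 2)) := by
  have hγ' : (0:ℝ) < 1 - γ := by linarith
  -- nonemptiness and R_m ≥ 0
  have hSne : Nonempty S := by
    by_contra h
    rw [not_nonempty_iff] at h
    rw [Finset.sum_eq_zero (fun s _ => (h.false s).elim)] at hd1
    norm_num at hd1
  have hAne : Nonempty A := by
    by_contra h
    rw [not_nonempty_iff] at h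
    have := hpi1 (Classical.arbitrary S)
    rw [Finset.sum_eq_zero (fun a _ => (h.false a).elim)] at this
    norm_num at this
  obtain ⟨s₀⟩ := hSne
  obtain ⟨a₀⟩ := hAne
  have hRm : 0 ≤ R_m := le_trans (hr0 (s₀, a₀)) (hrM (s₀, a₀))
  -- KL and Pinsker per state
  have hP1 : ∀ s, 0 ≤ ∑ a, pi s a * Real.log (pi s a / pis s a) ∧
      (1/2) * ∑ a, |pi s a - pis s a| ≤
        Real.sqrt ((∑ a, pi s a * Real.log (pi s a / pis s a)) / 2) := by
    intro s
    exact pinsker_aux (pi s) (pis s) (hpi0 s) (hpis0 s) (hpi1 s) (hpis1 s)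
      (fun a hq => by
        by_contra hp
        exact absurd (hac1 s a (lt_of_le_of_ne (hpi0 s a) (Ne.symm hp))) (by rw [hq]; exact lt_irrefl 0))
  have hP2 : ∀ s, 0 ≤ ∑ a, pis s a * Real.log (pis s a / pistar s a) ∧
      (1/2) * ∑ a, |pis s a - pistar s a| ≤
        Real.sqrt ((∑ a, pis s a * Real.log (pis s a / pistar s a)) / 2) := by
    intro s
    exact pinsker_aux (pis s) (pistar s) (hpis0 s) (hps0 s) (hpis1 s) (hps1 s)
      (fun a hq => by
        by_contra hp
        exact absurd (hac2 s a (lt_of_le_of_ne (hpis0 s a) (Ne.symm hp))) (by rw [hq]; exact lt_irrefl 0))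
  -- T1 bound
  set E₁ := Real.sqrt (ε₁ / 2) with hE₁
  set E₂ := Real.sqrt (ε₂ / 2) with hE₂
  have hT1 : ∑ s, dstar s * ((1/2) * ∑ a, |pi s a - pis s a|) ≤ E₁ := by
    have step1 : ∑ s, dstar s * ((1/2) * ∑ a, |pi s a - pis s a|) ≤
        ∑ s, dstar s * Real.sqrt ((∑ a, pi s a * Real.log (pi s a / pis s a)) / 2) :=
      Finset.sum_le_sum (fun s _ => mul_le_mul_of_nonneg_left (hP1 s).2 (hs0 s))
    have step2 := jensen_sqrt dstar (fun s => (∑ a, pi s a * Real.log (pi s a / pis s a)) / 2)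
      hs0 hs1 (fun s => div_nonneg (hP1 s).1 (by norm_num))
    have heq : ∑ s, dstar s * ((∑ a, pi s a * Real.log (pi s a / pis s a)) / 2)
        = (∑ s, dstar s * ∑ a, pi s a * Real.log (pi s a / pis s a)) / 2 := by
      rw [Finset.sum_div]
      exact Finset.sum_congr rfl (fun s _ => by ring)
    rw [heq] at step2
    have step3 : Real.sqrt ((∑ s, dstar s * ∑ a, pi s a * Real.log (pi s a / pis s a)) / 2)
        ≤ E₁ := Real.sqrt_le_sqrt (by linarith)
    exact le_trans step1 (le_trans step2 step3)
  have hT2 : ∑ s, dstar s * ((1/2) * ∑ a, |pis s a - pistar s a|) ≤ E₂ := by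
    have step1 : ∑ s, dstar s * ((1/2) * ∑ a, |pis s a - pistar s a|) ≤
        ∑ s, dstar s * Real.sqrt ((∑ a, pis s a * Real.log (pis s a / pistar s a)) / 2) :=
      Finset.sum_le_sum (fun s _ => mul_le_mul_of_nonneg_left (hP2 s).2 (hs0 s))
    have step2 := jensen_sqrt dstar (fun s => (∑ a, pis s a * Real.log (pis s a / pistar s a)) / 2)
      hs0 hs1 (fun s => div_nonneg (hP2 s).1 (by norm_num))
    have heq : ∑ s, dstar s * ((∑ a, pis s a * Real.log (pis s a / pistar s a)) / 2)
        = (∑ s, dstar s * ∑ a, pis s a * Real.log (pis s a / pistar s a)) / 2 := by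
      rw [Finset.sum_div]
      exact Finset.sum_congr rfl (fun s _ => by ring)
    rw [heq] at step2
    have step3 : Real.sqrt ((∑ s, dstar s * ∑ a, pis s a * Real.log (pis s a / pistar s a)) / 2)
        ≤ E₂ := Real.sqrt_le_sqrt (by linarith)
    exact le_trans step1 (le_trans step2 step3)
  -- triangle inequality for per-state TV
  set T := ∑ s, dstar s * ((1/2) * ∑ a, |pi s a - pistar s a|) with hT
  have hTle : T ≤ E₁ + E₂ := by
    have htri : T ≤ ∑ s, dstar s * ((1/2) * ∑ a, |pi s a - pis s a|)
        + ∑ s, dstar s * ((1/2) * ∑ a, |pis s a - pistar s a|) := by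
      rw [← Finset.sum_add_distrib]
      refine Finset.sum_le_sum (fun s _ => ?_)
      rw [← mul_add]
      refine mul_le_mul_of_nonneg_left ?_ (hs0 s)
      rw [← mul_add]
      refine mul_le_mul_of_nonneg_left ?_ (by norm_num)
      rw [← Finset.sum_add_distrib]
      exact Finset.sum_le_sum (fun a _ => abs_sub_le _ _ _)
    linarith
  have hT0 : 0 ≤ T := by
    refine Finset.sum_nonneg (fun s _ => mul_nonneg (hs0 s) (mul_nonneg (by norm_num)
      (Finset.sum_nonneg (fun a _ => abs_nonneg _))))
  -- value gap
  set u : S × A → ℝ := fun x => dstar x.1 * pistar x.1 x.2 with hu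
  set v : S × A → ℝ := fun x => dpi x.1 * pi x.1 x.2 with hv
  have hsu : ∑ x : S × A, u x = 1 := by
    rw [Fintype.sum_prod_type]
    simp only [hu]
    calc ∑ s, ∑ a, dstar s * pistar s a = ∑ s, dstar s * ∑ a, pistar s a := by
          exact Finset.sum_congr rfl (fun s _ => (Finset.mul_sum _ _ _).symm)
      _ = 1 := by simp only [hps1, mul_one]; exact hs1
  have hsv : ∑ x : S × A, v x = 1 := by
    rw [Fintype.sum_prod_type]
    simp only [hv]
    calc ∑ s, ∑ a, dpi s * pi s a = ∑ s, dpi s * ∑ a, pi s a := by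
          exact Finset.sum_congr rfl (fun s _ => (Finset.mul_sum _ _ _).symm)
      _ = 1 := by simp only [hpi1, mul_one]; exact hd1
  have hgap : Vstar - Vpi = (1/(1-γ)) * ∑ x : S × A, (u x - v x) * r x := by
    rw [hVstar, hVpi, ← mul_sub, ← Finset.sum_sub_distrib]
    congr 1
    exact Finset.sum_congr rfl (fun x _ => by simp only [hu, hv]; ring)
  have hval : ∑ x : S × A, (u x - v x) * r x ≤ R_m * ((1/2) * ∑ x : S × A, |u x - v x|) := by
    have h1 : ∀ x : S × A, (u x - v x) * r x ≤ R_m * ((|u x - v x| + (u x - v x)) / 2) := by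
      intro x
      rcases le_total (v x) (u x) with h | h
      · rw [abs_of_nonneg (by linarith)]
        have := hrM x
        nlinarith
      · rw [abs_of_nonpos (by linarith)]
        have := hr0 x
        nlinarith
    calc ∑ x : S × A, (u x - v x) * r x
        ≤ ∑ x : S × A, R_m * ((|u x - v x| + (u x - v x)) / 2) :=
          Finset.sum_le_sum (fun x _ => h1 x)
      _ = R_m * ((1/2) * ∑ x : S × A, |u x - v x|) := by
          rw [← Finset.mul_sum]
          congr 1
          rw [← Finset.sum_div, Finset.sum_add_distrib, Finset.sum_sub_distrib, hsu, hsv]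
          ring
  -- split joint TV
  have hsplit : (1/2) * ∑ x : S × A, |u x - v x| ≤ T + (1/2) * ∑ s, |dpi s - dstar s| := by
    have h1 : ∀ x : S × A, |u x - v x| ≤
        dstar x.1 * |pi x.1 x.2 - pistar x.1 x.2| + pi x.1 x.2 * |dpi x.1 - dstar x.1| := by
      intro x
      have : u x - v x = dstar x.1 * (pistar x.1 x.2 - pi x.1 x.2)
          + pi x.1 x.2 * (dstar x.1 - dpi x.1) := by simp only [hu, hv]; ring
      rw [this]
      calc |dstar x.1 * (pistar x.1 x.2 - pi x.1 x.2) + pi x.1 x.2 * (dstar x.1 - dpi x.1)|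
          ≤ |dstar x.1 * (pistar x.1 x.2 - pi x.1 x.2)| + |pi x.1 x.2 * (dstar x.1 - dpi x.1)| :=
            abs_add_le _ _
        _ = dstar x.1 * |pi x.1 x.2 - pistar x.1 x.2| + pi x.1 x.2 * |dpi x.1 - dstar x.1| := by
            rw [abs_mul, abs_mul, abs_of_nonneg (hs0 _), abs_of_nonneg (hpi0 _ _),
              abs_sub_comm (pistar x.1 x.2), abs_sub_comm (dstar x.1)]
    have h2 : ∑ x : S × A, |u x - v x| ≤
        ∑ x : S × A, (dstar x.1 * |pi x.1 x.2 - pistar x.1 x.2|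
          + pi x.1 x.2 * |dpi x.1 - dstar x.1|) := Finset.sum_le_sum (fun x _ => h1 x)
    have h3 : ∑ x : S × A, dstar x.1 * |pi x.1 x.2 - pistar x.1 x.2| = 2 * T := by
      rw [Fintype.sum_prod_type, hT, Finset.mul_sum]
      refine Finset.sum_congr rfl (fun s _ => ?_)
      dsimp only
      rw [← Finset.mul_sum]
      ring
    have h4 : ∑ x : S × A, pi x.1 x.2 * |dpi x.1 - dstar x.1| = ∑ s, |dpi s - dstar s| := by
      rw [Fintype.sum_prod_type]
      refine Finset.sum_congr rfl (fun s _ => ?_)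
      dsimp only
      rw [← Finset.sum_mul, hpi1 s, one_mul]
    rw [Finset.sum_add_distrib, h3, h4] at h2
    linarith
  -- combine with herr
  have hcomb : (1/2) * ∑ x : S × A, |u x - v x| ≤ T / (1-γ) := by
    have h5 : (1/2) * ∑ s, |dpi s - dstar s| ≤ (γ/(1-γ)) * T := herr
    have : T + (γ/(1-γ)) * T = T / (1-γ) := by field_simp; ring
    linarith
  -- final assembly
  have habs0 : 0 ≤ (1/2) * ∑ x : S × A, |u x - v x| :=
    mul_nonneg (by norm_num) (Finset.sum_nonneg (fun x _ => abs_nonneg _))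
  have hE0 : 0 ≤ E₁ + E₂ := add_nonneg (Real.sqrt_nonneg _) (Real.sqrt_nonneg _)
  have hfin : Vstar - Vpi ≤ (R_m/(1-γ)^2) * (E₁ + E₂) := by
    rw [hgap]
    have step : ∑ x : S × A, (u x - v x) * r x ≤ R_m * (T / (1-γ)) :=
      le_trans hval (mul_le_mul_of_nonneg_left hcomb hRm)
    have hinv : 0 ≤ 1/(1-γ) := by positivity
    calc (1/(1-γ)) * ∑ x : S × A, (u x - v x) * r x
        ≤ (1/(1-γ)) * (R_m * (T / (1-γ))) := mul_le_mul_of_nonneg_left step hinv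
      _ = (R_m/(1-γ)^2) * T := by
          have hne : (1:ℝ) - γ ≠ 0 := ne_of_gt hγ'
          rw [sq]
          field_simp
      _ ≤ (R_m/(1-γ)^2) * (E₁ + E₂) := mul_le_mul_of_nonneg_left hTle (by positivity)
  have hlast : (R_m/(1-γ)^2) * (E₁ + E₂) ≤ (2 * R_m / (1-γ)^2) * (E₁ + E₂) := by
    refine mul_le_mul_of_nonneg_right ?_ hE0
    have h2 : (0:ℝ) < (1-γ)^2 := by positivity
    rw [div_le_div_iff_of_pos_right h2]
    linarith
  exact le_trans hfin hlast
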